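/- arXiv:2001.11257 — 8 statements merged into one kernel-verified Lean document; each statement's English description precedes it below -/
import Mathlib

section
/- Let σ, p, α > 0 and K ≥ 1 satisfy K·exp(−α(σ+p)) ≤ 1/4, and let τ ∈ ℝ. Suppose f : ℝ → ℝ satisfies 0 ≤ f(t) ≤ 1 for all t, and suppose that for every τ' ≤ τ and every t ≤ τ' − σ we have f(t) ≤ max( (1/2)·sup_{s ≤ τ'+p} f(s), K·sup_{s ≥ τ'+p} exp(−α(s−t))·f(s) ). Then for every m ∈ ℕ and every t ≤ τ − σ − m(σ+p) we have f(t) ≤ 2^{−(m+1)}. Consequently f(t) ≤ K̃·exp(α̃(t−τ)) for all t ≤ τ − σ, where α̃ = (log 2)/(σ+p) and K̃ = exp(α̃(σ+p)). -/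
/-- The abstract iteration scheme converting the one-step halving estimate into
uniform exponential decay. -/
theorem iteration_scheme_exponential_decay
    (σ p α K τ : ℝ) (hσ : 0 < σ) (hp : 0 < p) (hα : 0 < α) (hK : 1 ≤ K)
    (hKsmall : K * Real.exp (-α * (σ + p)) ≤ 1 / 4)
    (f : ℝ → ℝ) (hf0 : ∀ t, 0 ≤ f t) (hf1 : ∀ t, f t ≤ 1)
    (hstep : ∀ τ' ≤ τ, ∀ t ≤ τ' - σ,
      f t ≤ max ((1 / 2) * sSup (f '' Set.Iic (τ' + p)))
              (K * sSup ((fun s => Real.exp (-α * (s - t)) * f s) '' Set.Ici (τ' + p)))) :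
    (∀ m : ℕ, ∀ t ≤ τ - σ - m * (σ + p), f t ≤ (1 / 2) ^ (m + 1)) ∧
    (∀ t ≤ τ - σ,
      f t ≤ Real.exp ((Real.log 2 / (σ + p)) * (σ + p))
              * Real.exp ((Real.log 2 / (σ + p)) * (t - τ))) := by
  have hσp : 0 < σ + p := by linarith
  have hK0 : (0:ℝ) < K := lt_of_lt_of_le one_pos hK
  have hE4 : Real.exp (-α * (σ + p)) ≤ 1/4 := by
    nlinarith [Real.exp_pos (-α * (σ+p))]
  have hEpos : (0:ℝ) < Real.exp (-α * (σ+p)) := Real.exp_pos _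
  -- K · exp(-α(σ+p))^j ≤ (1/4)^j for j ≥ 1
  have hKj : ∀ j : ℕ, 1 ≤ j → K * Real.exp (-α * (σ+p)) ^ j ≤ (1/4)^j := by
    intro j hj
    obtain ⟨j', rfl⟩ := Nat.exists_eq_add_of_le hj
    calc K * Real.exp (-α * (σ+p)) ^ (1 + j')
        = (K * Real.exp (-α*(σ+p))) * Real.exp (-α*(σ+p)) ^ j' := by ring
      _ ≤ (1/4) * (1/4)^j' := by
          apply mul_le_mul hKsmall (pow_le_pow_left₀ hEpos.le hE4 j') (by positivity)
            (by norm_num)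
      _ = (1/4)^(1+j') := by ring
  have main : ∀ m : ℕ, ∀ t ≤ τ - σ - m * (σ + p), f t ≤ (1 / 2) ^ (m + 1) := by
    intro m
    induction m using Nat.strong_induction_on with
    | _ m ih =>
      intro t ht
      have hmσ : (0:ℝ) ≤ (m:ℝ) * (σ+p) := by positivity
      have h := hstep (t + σ) (by linarith) t (by linarith)
      have h1 : (1/2) * sSup (f '' Set.Iic (t + σ + p)) ≤ (1/2)^(m+1) := by
        have hsup : sSup (f '' Set.Iic (t + σ + p)) ≤ (1/2)^m := by
          apply Real.sSup_le _ (by positivity)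
          rintro x ⟨s, hs, rfl⟩
          simp only [Set.mem_Iic] at hs
          cases m with
          | zero => simpa using hf1 s
          | succ m' =>
            apply ih m' (Nat.lt_succ_self _) s
            push_cast at ht ⊢
            linarith
        calc (1/2) * sSup (f '' Set.Iic (t + σ + p)) ≤ (1/2) * (1/2)^m := by linarith
          _ = (1/2)^(m+1) := by ring
      have h2 : K * sSup ((fun s => Real.exp (-α * (s - t)) * f s) '' Set.Ici (t + σ + p))
          ≤ (1/2)^(m+1) := by
        have hsup : sSup ((fun s => Real.exp (-α * (s - t)) * f s) '' Set.Ici (t + σ + p))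
            ≤ (1/2)^(m+1) / K := by
          apply Real.sSup_le _ (by positivity)
          rintro x ⟨s, hs, rfl⟩
          simp only [Set.mem_Ici] at hs
          show Real.exp (-α * (s - t)) * f s ≤ (1/2)^(m+1) / K
          rw [le_div_iff₀ hK0]
          set d := s - t with hd
          have hdge : σ + p ≤ d := by rw [hd]; linarith
          have hd0 : (0:ℝ) ≤ d := by linarith
          set j : ℕ := min (m+1) (Nat.floor (d / (σ+p))) with hjdef
          have hj1 : 1 ≤ j := by
            apply le_min (Nat.le_add_left 1 m)
            apply Nat.le_floor
            rw [Nat.cast_one, le_div_iff₀ hσp]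
            linarith
          have hjd : (j:ℝ) * (σ+p) ≤ d := by
            have h1' : (j:ℝ) ≤ d / (σ+p) := by
              calc (j:ℝ) ≤ (Nat.floor (d / (σ+p)) : ℝ) := by
                    exact_mod_cast min_le_right _ _
                _ ≤ d / (σ+p) := Nat.floor_le (by positivity)
            calc (j:ℝ) * (σ+p) ≤ (d / (σ+p)) * (σ+p) :=
                  mul_le_mul_of_nonneg_right h1' hσp.le
              _ = d := by field_simp
          have hKe : K * Real.exp (-α * d) ≤ (1/4)^j := by
            calc K * Real.exp (-α * d) ≤ K * Real.exp (-α * ((j:ℝ) * (σ+p))) := by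
                  apply mul_le_mul_of_nonneg_left _ hK0.le
                  apply Real.exp_le_exp.mpr
                  nlinarith [mul_le_mul_of_nonneg_left hjd hα.le]
              _ = K * Real.exp (-α * (σ+p)) ^ j := by
                  rw [← Real.exp_nat_mul]
                  congr 2
                  ring
              _ ≤ (1/4)^j := hKj j hj1
          have h14 : ((1:ℝ)/4)^j = (1/2)^(2*j) := by
            rw [pow_mul]; norm_num
          by_cases hjm : j < m
          · -- use the induction hypothesis at m - j - 1
            have hjfloor : j = Nat.floor (d / (σ+p)) := by omega
            have hdlt : d < ((j:ℝ) + 1) * (σ+p) := by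
              have hfl := Nat.lt_floor_add_one (d / (σ+p))
              rw [← hjfloor] at hfl
              calc d = (d / (σ+p)) * (σ+p) := by field_simp
                _ < ((j:ℝ)+1) * (σ+p) := mul_lt_mul_of_pos_right hfl hσp
            have hfk : f s ≤ (1/2)^(m - j - 1 + 1) := by
              apply ih (m - j - 1) (by omega) s
              have hcast : ((m - j - 1 : ℕ) : ℝ) = (m:ℝ) - j - 1 := by
                push_cast [Nat.cast_sub (by omega : 1 ≤ m - j),
                  Nat.cast_sub (by omega : j ≤ m)]
                ring
              rw [hcast]
              have hs' : s = t + d := by rw [hd]; ring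
              have hexpand : ((m:ℝ) - j - 1) * (σ+p)
                  = (m:ℝ)*(σ+p) - ((j:ℝ)+1)*(σ+p) := by ring
              rw [hs']
              linarith [hexpand]
            have hfk' : f s ≤ (1/2)^(m - j) := by
              have hmj : m - j - 1 + 1 = m - j := by omega
              rwa [hmj] at hfk
            calc Real.exp (-α * d) * f s * K
                = (K * Real.exp (-α * d)) * f s := by ring
              _ ≤ (1/4)^j * (1/2)^(m-j) := by
                  apply mul_le_mul hKe hfk' (hf0 s) (by positivity)
              _ = (1/2)^(2*j + (m - j)) := by rw [h14, pow_add]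
              _ ≤ (1/2)^(m+1) := by
                  apply pow_le_pow_of_le_one (by norm_num) (by norm_num)
                  omega
          · -- j ≥ m : pure exponential decay suffices
            push_neg at hjm
            calc Real.exp (-α * d) * f s * K
                = (K * Real.exp (-α * d)) * f s := by ring
              _ ≤ (1/4)^j * 1 := by
                  apply mul_le_mul hKe (hf1 s) (hf0 s) (by positivity)
              _ = (1/2)^(2*j) := by rw [mul_one, h14]
              _ ≤ (1/2)^(m+1) := by
                  apply pow_le_pow_of_le_one (by norm_num) (by norm_num)
                  omega
        calc K * sSup ((fun s => Real.exp (-α * (s - t)) * f s) '' Set.Ici (t + σ + p))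
            ≤ K * ((1/2)^(m+1) / K) := mul_le_mul_of_nonneg_left hsup hK0.le
          _ = (1/2)^(m+1) := by field_simp
      calc f t ≤ _ := h
        _ ≤ (1/2)^(m+1) := max_le h1 h2
  refine ⟨main, ?_⟩
  intro t ht
  set m : ℕ := Nat.floor ((τ - σ - t) / (σ + p)) with hm
  have harg : (0:ℝ) ≤ (τ - σ - t) / (σ + p) := by
    apply div_nonneg (by linarith) hσp.le
  have hmle : (m:ℝ) * (σ+p) ≤ τ - σ - t := by
    have h1' : (m:ℝ) ≤ (τ - σ - t) / (σ+p) := Nat.floor_le harg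
    calc (m:ℝ) * (σ+p) ≤ ((τ - σ - t) / (σ+p)) * (σ+p) :=
          mul_le_mul_of_nonneg_right h1' hσp.le
      _ = τ - σ - t := by field_simp
  have hmgt : τ - σ - t < ((m:ℝ) + 1) * (σ+p) := by
    have hfl := Nat.lt_floor_add_one ((τ - σ - t) / (σ+p))
    calc τ - σ - t = ((τ - σ - t) / (σ+p)) * (σ+p) := by field_simp
      _ < ((m:ℝ)+1) * (σ+p) := mul_lt_mul_of_pos_right hfl hσp
  have hft : f t ≤ (1/2)^(m+1) := main m t (by linarith)
  have hL : (0:ℝ) < Real.log 2 := Real.log_pos (by norm_num)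
  have hexp : ((1:ℝ)/2)^(m+1) = Real.exp ((((m+1 : ℕ)):ℝ) * Real.log (1/2)) := by
    rw [Real.exp_nat_mul, Real.exp_log (by norm_num : (0:ℝ) < 1/2)]
  have hq2 : -((m:ℝ)+2) ≤ (t - τ)/(σ+p) := by
    rw [le_div_iff₀ hσp]
    nlinarith
  refine hft.trans ?_
  rw [← Real.exp_add, hexp]
  apply Real.exp_le_exp.mpr
  have hA : Real.log 2/(σ+p)*(σ+p) = Real.log 2 := by field_simp
  have hB : Real.log 2/(σ+p)*(t-τ) = Real.log 2 * ((t-τ)/(σ+p)) := by ring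
  rw [hA, hB, one_div, Real.log_inv]
  push_cast
  nlinarith [mul_nonneg hL.le (by linarith : (0:ℝ) ≤ (t-τ)/(σ+p) + ((m:ℝ)+2))]
end

section
/- Let c : ℕ → ℂ and 0 < m ≤ M be constants with m ≤ |c_n| ≤ M for all n. Define e ∈ ℓ²(ℕ, ℂ) by e_n = c_n·exp(−n²), and let S : ℓ²(ℕ,ℂ) → ℓ²(ℕ,ℂ) be the backward shift, (Sa)_n = a_{n+1}. Then for every ℓ ∈ ℕ the vectors e, S e, S² e, …, S^ℓ e are linearly independent. In particular the span of { S^N e : N ∈ ℕ } is infinite dimensional. -/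
set_option maxHeartbeats 1000000

open Finset Filter Real

lemma gaussian_key (c : ℕ → ℂ) (m M : ℝ) (hm : 0 < m) (hmM : m ≤ M)
    (hc : ∀ n, m ≤ ‖c n‖ ∧ ‖c n‖ ≤ M) :
    LinearIndependent ℂ (fun N : ℕ =>
      (fun n : ℕ => c (n + N) * (Real.exp (-((n + N : ℕ) : ℝ) ^ 2) : ℂ) : ℕ → ℂ)) := by
  have hM : 0 < M := lt_of_lt_of_le hm hmM
  rw [linearIndependent_iff']
  intro s
  induction s using Finset.strongInduction with
  | _ s ih =>
    intro g hg i hi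
    have hsne : s.Nonempty := ⟨i, hi⟩
    set i₀ := s.min' hsne with hi₀
    have hi₀s : i₀ ∈ s := s.min'_mem hsne
    -- evaluation at n
    have heval : ∀ n : ℕ, ∑ j ∈ s, g j * (c (n + j) * (Real.exp (-((n + j : ℕ) : ℝ) ^ 2) : ℂ)) = 0 := by
      intro n
      have := congrFun hg n
      simpa [Finset.sum_apply] using this
    set C := ∑ j ∈ s, ‖g j‖ with hC
    have hC0 : 0 ≤ C := Finset.sum_nonneg fun j _ => norm_nonneg _
    -- the main bound
    have hbound : ∀ n : ℕ, ‖g i₀‖ * m ≤ C * M * Real.exp (-(n : ℝ)) := by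
      intro n
      have h1 : g i₀ * (c (n + i₀) * (Real.exp (-((n + i₀ : ℕ) : ℝ) ^ 2) : ℂ))
          = -∑ j ∈ s.erase i₀, g j * (c (n + j) * (Real.exp (-((n + j : ℕ) : ℝ) ^ 2) : ℂ)) := by
        have := heval n
        rw [← Finset.add_sum_erase s _ hi₀s] at this
        linear_combination this
      have hL : ‖g i₀‖ * m * Real.exp (-((n + i₀ : ℕ) : ℝ) ^ 2)
          ≤ ‖g i₀ * (c (n + i₀) * (Real.exp (-((n + i₀ : ℕ) : ℝ) ^ 2) : ℂ))‖ := by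
        rw [norm_mul, norm_mul, Complex.norm_real, Real.norm_eq_abs,
          abs_of_pos (Real.exp_pos _), mul_assoc]
        have h := (hc (n + i₀)).1
        have h0 := (Real.exp_pos (-((n + i₀ : ℕ) : ℝ) ^ 2)).le
        exact mul_le_mul_of_nonneg_left (mul_le_mul_of_nonneg_right h h0) (norm_nonneg _)
      have hR : ‖∑ j ∈ s.erase i₀, g j * (c (n + j) * (Real.exp (-((n + j : ℕ) : ℝ) ^ 2) : ℂ))‖
          ≤ C * M * Real.exp (-((n + i₀ + 1 : ℕ) : ℝ) ^ 2) := by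
        calc _ ≤ ∑ j ∈ s.erase i₀, ‖g j * (c (n + j) * (Real.exp (-((n + j : ℕ) : ℝ) ^ 2) : ℂ))‖ :=
              norm_sum_le _ _
          _ ≤ ∑ j ∈ s.erase i₀, ‖g j‖ * (M * Real.exp (-((n + i₀ + 1 : ℕ) : ℝ) ^ 2)) := by
              apply Finset.sum_le_sum
              intro j hj
              rw [norm_mul, norm_mul, Complex.norm_real, Real.norm_eq_abs,
                abs_of_pos (Real.exp_pos _)]
              have hj1 : i₀ + 1 ≤ j := by
                have := s.min'_le j (Finset.mem_of_mem_erase hj)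
                have hne := Finset.ne_of_mem_erase hj
                omega
              have hexp : Real.exp (-((n + j : ℕ) : ℝ) ^ 2)
                  ≤ Real.exp (-((n + i₀ + 1 : ℕ) : ℝ) ^ 2) := by
                apply Real.exp_le_exp.2
                have hle : ((n + i₀ + 1 : ℕ) : ℝ) ≤ ((n + j : ℕ) : ℝ) :=
                  Nat.cast_le.mpr (by omega)
                nlinarith [Nat.cast_nonneg (α := ℝ) (n + i₀ + 1)]
              have hcj := (hc (n + j)).2
              exact mul_le_mul_of_nonneg_left
                (mul_le_mul hcj hexp (Real.exp_pos _).le hM.le) (norm_nonneg _)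
          _ = (∑ j ∈ s.erase i₀, ‖g j‖) * (M * Real.exp (-((n + i₀ + 1 : ℕ) : ℝ) ^ 2)) := by
              rw [← Finset.sum_mul]
          _ ≤ C * (M * Real.exp (-((n + i₀ + 1 : ℕ) : ℝ) ^ 2)) :=
              mul_le_mul_of_nonneg_right
                (Finset.sum_le_sum_of_subset_of_nonneg (Finset.erase_subset _ _)
                  (fun j _ _ => norm_nonneg _))
                (mul_nonneg hM.le (Real.exp_pos _).le)
          _ = C * M * Real.exp (-((n + i₀ + 1 : ℕ) : ℝ) ^ 2) := by ring
      have hkey : ‖g i₀‖ * m * Real.exp (-((n + i₀ : ℕ) : ℝ) ^ 2)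
          ≤ C * M * Real.exp (-((n + i₀ + 1 : ℕ) : ℝ) ^ 2) := by
        calc _ ≤ ‖g i₀ * (c (n + i₀) * (Real.exp (-((n + i₀ : ℕ) : ℝ) ^ 2) : ℂ))‖ := hL
          _ = ‖∑ j ∈ s.erase i₀, g j * (c (n + j) * (Real.exp (-((n + j : ℕ) : ℝ) ^ 2) : ℂ))‖ := by
              rw [h1, norm_neg]
          _ ≤ _ := hR
      -- divide by exp(-(n+i₀)^2)
      have hexp2 : Real.exp (-((n + i₀ + 1 : ℕ) : ℝ) ^ 2)
          ≤ Real.exp (-(n : ℝ)) * Real.exp (-((n + i₀ : ℕ) : ℝ) ^ 2) := by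
        rw [← Real.exp_add]
        apply Real.exp_le_exp.2
        push_cast
        nlinarith [Nat.cast_nonneg (α := ℝ) i₀, Nat.cast_nonneg (α := ℝ) n]
      apply le_of_mul_le_mul_right _ (Real.exp_pos (-((n + i₀ : ℕ) : ℝ) ^ 2))
      calc ‖g i₀‖ * m * Real.exp (-((n + i₀ : ℕ) : ℝ) ^ 2)
          ≤ C * M * Real.exp (-((n + i₀ + 1 : ℕ) : ℝ) ^ 2) := hkey
        _ ≤ C * M * (Real.exp (-(n : ℝ)) * Real.exp (-((n + i₀ : ℕ) : ℝ) ^ 2)) :=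
            mul_le_mul_of_nonneg_left hexp2 (mul_nonneg hC0 hM.le)
        _ = C * M * Real.exp (-(n : ℝ)) * Real.exp (-((n + i₀ : ℕ) : ℝ) ^ 2) := by ring
    -- take limit
    have hlim : Tendsto (fun n : ℕ => C * M * Real.exp (-(n : ℝ))) atTop (nhds 0) := by
      have : Tendsto (fun n : ℕ => Real.exp (-(n : ℝ))) atTop (nhds 0) :=
        Real.tendsto_exp_neg_atTop_nhds_zero.comp tendsto_natCast_atTop_atTop
      simpa using this.const_mul (C * M)
    have hle0 : ‖g i₀‖ * m ≤ 0 :=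
      le_of_tendsto_of_tendsto' tendsto_const_nhds hlim hbound
    have hg0 : g i₀ = 0 := by
      have := norm_nonneg (g i₀)
      have : ‖g i₀‖ = 0 := by nlinarith
      simpa using this
    -- induction step
    by_cases h : i = i₀
    · rw [h]; exact hg0
    · have hie : i ∈ s.erase i₀ := Finset.mem_erase.2 ⟨h, hi⟩
      apply ih (s.erase i₀) (Finset.erase_ssubset hi₀s) g _ i hie
      funext n
      have := heval n
      rw [← Finset.add_sum_erase s _ hi₀s, hg0] at this
      simp only [Finset.sum_apply, Pi.smul_apply, smul_eq_mul, Pi.zero_apply]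
      simpa using this

/-- Gaussian-decaying sequences with mixed coefficients bounded away from zero:
all backward shifts are linearly independent, and their span is infinite
dimensional. -/
theorem gaussian_shifts_linearIndependent
    (c : ℕ → ℂ) (m M : ℝ) (hm : 0 < m) (hmM : m ≤ M)
    (hc : ∀ n, m ≤ ‖c n‖ ∧ ‖c n‖ ≤ M) :
    (∀ ℓ : ℕ, LinearIndependent ℂ
      (fun i : Fin (ℓ + 1) =>
        (fun n : ℕ => c (n + (i : ℕ)) * (Real.exp (-((n + (i : ℕ) : ℕ) : ℝ) ^ 2) : ℂ)
          : ℕ → ℂ))) ∧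
    ¬ Module.Finite ℂ
      (Submodule.span ℂ (Set.range (fun N : ℕ =>
        (fun n : ℕ => c (n + N) * (Real.exp (-((n + N : ℕ) : ℝ) ^ 2) : ℂ) : ℕ → ℂ)))) := by
  have key := gaussian_key c m M hm hmM hc
  constructor
  · intro ℓ
    exact key.comp (fun i : Fin (ℓ + 1) => (i : ℕ)) Fin.val_injective
  · intro hfin
    set f := fun N : ℕ =>
      (fun n : ℕ => c (n + N) * (Real.exp (-((n + N : ℕ) : ℝ) ^ 2) : ℂ) : ℕ → ℂ)
    have hmem : ∀ N, f N ∈ Submodule.span ℂ (Set.range f) :=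
      fun N => Submodule.subset_span (Set.mem_range_self N)
    have hli : LinearIndependent ℂ (fun N : ℕ =>
        (⟨f N, hmem N⟩ : Submodule.span ℂ (Set.range f))) := by
      apply LinearIndependent.of_comp (Submodule.span ℂ (Set.range f)).subtype
      exact key
    exact Module.Finite.not_linearIndependent_of_infinite _ hli
end

section
/- Let φ₀ : ℝ → ℂ be a continuous function whose support is contained in the open interval (1,2), and define ψ : ℝ → ℂ by ψ(s) = φ₀(s) − e·φ₀(s−1). Then for every s ∈ ℝ the series ∑_{k=1}^∞ exp(−k)·ψ(s+k) converges absolutely and equals −φ₀(s). In particular ∑_{k=1}^∞ exp(−k)·ψ(s+k) = 0 for every s ≤ 0. -/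
/-- Telescoping identity producing an explicit function annihilated by the tail
functionals of the kernel γ_k = e^{-k}. -/
theorem telescoping_annihilator
    (φ₀ : ℝ → ℂ) (hcont : Continuous φ₀)
    (hsupp : Function.support φ₀ ⊆ Set.Ioo (1 : ℝ) 2)
    (ψ : ℝ → ℂ) (hψ : ∀ s, ψ s = φ₀ s - (Real.exp 1 : ℂ) * φ₀ (s - 1)) :
    (∀ s : ℝ,
      Summable (fun k : ℕ => ‖(Real.exp (-((k : ℝ) + 1)) : ℂ) * ψ (s + ((k : ℝ) + 1))‖) ∧
      (∑' k : ℕ, (Real.exp (-((k : ℝ) + 1)) : ℂ) * ψ (s + ((k : ℝ) + 1))) = -φ₀ s) ∧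
    (∀ s ≤ (0 : ℝ),
      (∑' k : ℕ, (Real.exp (-((k : ℝ) + 1)) : ℂ) * ψ (s + ((k : ℝ) + 1))) = 0) := by
  have hzero : ∀ x : ℝ, x ∉ Set.Ioo (1:ℝ) 2 → φ₀ x = 0 := by
    intro x hx
    by_contra h
    exact hx (hsupp h)
  have hmain : ∀ s : ℝ,
      Summable (fun k : ℕ => ‖(Real.exp (-((k : ℝ) + 1)) : ℂ) * ψ (s + ((k : ℝ) + 1))‖) ∧
      (∑' k : ℕ, (Real.exp (-((k : ℝ) + 1)) : ℂ) * ψ (s + ((k : ℝ) + 1))) = -φ₀ s := by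
    intro s
    set f : ℕ → ℂ := fun k => (Real.exp (-(k : ℝ)) : ℂ) * φ₀ (s + k) with hf
    have hterm : ∀ k : ℕ,
        (Real.exp (-((k : ℝ) + 1)) : ℂ) * ψ (s + ((k : ℝ) + 1)) = f (k + 1) - f k := by
      intro k
      rw [hψ]
      have h1 : (s + ((k : ℝ) + 1) - 1) = s + (k : ℝ) := by ring
      simp only [hf, h1]
      push_cast
      rw [mul_sub, ← mul_assoc, ← Complex.exp_add]
      ring_nf
    set N : ℕ := ⌈(2:ℝ) - s⌉₊ with hN
    have hfN : ∀ k : ℕ, N ≤ k → f k = 0 := by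
      intro k hk
      have : (2:ℝ) - s ≤ k := le_trans (Nat.le_ceil _) (by exact_mod_cast hk)
      have : φ₀ (s + k) = 0 := hzero _ (fun h => absurd h.2 (by linarith))
      simp [hf, this]
    have hvanish : ∀ k : ℕ, N ≤ k →
        (Real.exp (-((k : ℝ) + 1)) : ℂ) * ψ (s + ((k : ℝ) + 1)) = 0 := by
      intro k hk
      rw [hterm, hfN k hk, hfN (k+1) (le_trans hk (Nat.le_succ k)), sub_zero]
    have hsum : Summable (fun k : ℕ => (Real.exp (-((k : ℝ) + 1)) : ℂ) * ψ (s + ((k : ℝ) + 1))) :=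
      summable_of_ne_finset_zero (s := Finset.range N)
        (fun k hk => hvanish k (by simpa using le_of_not_gt (fun h => hk (Finset.mem_range.mpr h))))
    constructor
    · exact summable_of_ne_finset_zero (s := Finset.range N)
        (fun k hk => by
          rw [hvanish k (by simpa using le_of_not_gt (fun h => hk (Finset.mem_range.mpr h)))]; simp)
    · rw [tsum_eq_sum (s := Finset.range N)
        (fun k hk => hvanish k (by simpa using le_of_not_gt (fun h => hk (Finset.mem_range.mpr h))))]
      have : ∑ k ∈ Finset.range N, ((Real.exp (-((k : ℝ) + 1)) : ℂ) * ψ (s + ((k : ℝ) + 1)))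
          = ∑ k ∈ Finset.range N, (f (k+1) - f k) := by
        exact Finset.sum_congr rfl (fun k _ => hterm k)
      rw [this, Finset.sum_range_sub f, hfN N le_rfl]
      simp [hf]
  refine ⟨hmain, fun s hs => ?_⟩
  rw [(hmain s).2]
  have : φ₀ s = 0 := hzero s (fun h => absurd h.1 (by linarith))
  simp [this]
end

section
/- Let ψ : ℝ → ℂ be a bounded measurable function vanishing outside the compact interval [0,4] and satisfying ∫_0^∞ ψ(r)·exp(−r) dr = 0. Then for every bounded continuous φ : ℝ → ℂ one has ∫_0^∞ ∫_{−r}^0 ψ(s+r)·exp(−r)·φ(s) ds dr = 0. -/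
open MeasureTheory Set

/-- Degeneracy of the Hale inner product for the exponential convolution kernel
θ(ξ) = exp(-ξ). -/
theorem hale_degenerate_convolution
    (ψ : ℝ → ℂ) (hmeas : Measurable ψ) (hb : ∃ B, ∀ r, ‖ψ r‖ ≤ B)
    (hsupp : ∀ r, r ∉ Set.Icc (0 : ℝ) 4 → ψ r = 0)
    (hzero : (∫ r in Set.Ioi (0 : ℝ), ψ r * (Real.exp (-r) : ℂ)) = 0)
    (φ : ℝ → ℂ) (hφc : Continuous φ) (hφb : ∃ B, ∀ s, ‖φ s‖ ≤ B) :
    (∫ r in Set.Ioi (0 : ℝ),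
        ∫ s in (-r)..0, ψ (s + r) * (Real.exp (-r) : ℂ) * φ s) = 0 := by
  obtain ⟨B1, hB1⟩ := hb
  obtain ⟨B2, hB2⟩ := hφb
  have hB1' : 0 ≤ B1 := le_trans (norm_nonneg _) (hB1 0)
  have hB2' : 0 ≤ B2 := le_trans (norm_nonneg _) (hB2 0)
  set f : ℝ → ℝ → ℂ := fun r s =>
    (Set.Ioc (-r) 0).indicator (fun s => ψ (s + r) * (Real.exp (-r) : ℂ) * φ s) s with hfdef
  -- measurability of uncurried f
  have hFmeas : Measurable (Function.uncurry f) := by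
    have : Function.uncurry f = fun p : ℝ × ℝ =>
        if -p.1 < p.2 ∧ p.2 ≤ 0 then ψ (p.2 + p.1) * (Real.exp (-p.1) : ℂ) * φ p.2 else 0 := by
      funext p
      simp [Function.uncurry, hfdef, Set.indicator_apply, Set.mem_Ioc]
    rw [this]
    apply Measurable.ite
    · exact (measurableSet_lt measurable_fst.neg measurable_snd).inter
        (measurableSet_le measurable_snd measurable_const)
    · exact ((hmeas.comp (measurable_snd.add measurable_fst)).mul
        (Complex.measurable_ofReal.comp (Real.measurable_exp.comp measurable_fst.neg))).mul
        (hφc.measurable.comp measurable_snd)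
    · exact measurable_const
  -- pointwise norm bound with support control
  have hnorm : ∀ r s, ‖f r s‖ ≤
      (Set.Icc (-r) (4 - r)).indicator (fun _ => B1 * B2 * Real.exp (-r)) s := by
    intro r s
    have hg0 : (0:ℝ) ≤ B1 * B2 * Real.exp (-r) :=
      mul_nonneg (mul_nonneg hB1' hB2') (Real.exp_pos _).le
    by_cases hmem : s ∈ Set.Ioc (-r) 0
    · rw [hfdef]
      simp only [Set.indicator_of_mem hmem]
      by_cases hsup : s + r ∈ Set.Icc (0:ℝ) 4
      · have hs : s ∈ Set.Icc (-r) (4 - r) := by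
          constructor <;> [linarith [hsup.1]; linarith [hsup.2]]
        rw [Set.indicator_of_mem hs]
        calc ‖ψ (s + r) * (Real.exp (-r) : ℂ) * φ s‖
            = ‖ψ (s + r)‖ * Real.exp (-r) * ‖φ s‖ := by
              rw [norm_mul, norm_mul, Complex.norm_real, Real.norm_eq_abs,
                abs_of_pos (Real.exp_pos _)]
          _ ≤ B1 * Real.exp (-r) * B2 := by
              gcongr
              exacts [hB1 _, hB2 _]
          _ = B1 * B2 * Real.exp (-r) := by ring
      · rw [hsupp _ hsup]
        simpa using Set.indicator_nonneg (fun _ _ => hg0) s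
    · rw [hfdef]
      simp only [Set.indicator_of_notMem hmem, norm_zero]
      exact Set.indicator_nonneg (fun _ _ => hg0) s
  -- integrability on the product
  have hInt : Integrable (Function.uncurry f)
      ((volume.restrict (Set.Ioi (0:ℝ))).prod volume) := by
    rw [MeasureTheory.integrable_prod_iff hFmeas.aestronglyMeasurable]
    constructor
    · refine Filter.Eventually.of_forall fun r => ?_
      have : Integrable (fun s => (Set.Icc (-r) (4 - r)).indicator
          (fun _ => B1 * B2 * Real.exp (-r)) s) volume := by
        rw [integrable_indicator_iff measurableSet_Icc]
        exact integrableOn_const measure_Icc_lt_top.ne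
      exact this.mono' ((hFmeas.comp (measurable_prodMk_left)).aestronglyMeasurable)
        (Filter.Eventually.of_forall fun s => by
          simpa using hnorm r s)
    · have hbnd : ∀ r, (∫ s, ‖Function.uncurry f (r, s)‖) ≤ B1 * B2 * Real.exp (-r) * 4 := by
        intro r
        have hdomInt : Integrable (fun s => (Set.Icc (-r) (4 - r)).indicator
            (fun _ => B1 * B2 * Real.exp (-r)) s) volume := by
          rw [integrable_indicator_iff measurableSet_Icc]
          exact integrableOn_const measure_Icc_lt_top.ne
        calc (∫ s, ‖Function.uncurry f (r, s)‖)
            ≤ ∫ s, (Set.Icc (-r) (4 - r)).indicator (fun _ => B1 * B2 * Real.exp (-r)) s := by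
              apply integral_mono_of_nonneg
                (Filter.Eventually.of_forall fun s => norm_nonneg _) hdomInt
                (Filter.Eventually.of_forall fun s => hnorm r s)
          _ = B1 * B2 * Real.exp (-r) * (volume (Set.Icc (-r) (4 - r))).toReal := by
              rw [integral_indicator_const _ measurableSet_Icc]; simp [smul_eq_mul, mul_comm]
          _ = B1 * B2 * Real.exp (-r) * 4 := by
              rw [Real.volume_Icc]
              norm_num
      have hgint : Integrable (fun r => B1 * B2 * Real.exp (-r) * 4)
          (volume.restrict (Set.Ioi (0:ℝ))) := by
        have h1 : IntegrableOn (fun r => Real.exp (-1 * r)) (Set.Ioi (0:ℝ)) :=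
          exp_neg_integrableOn_Ioi 0 one_pos
        simp only [neg_one_mul] at h1
        exact (h1.const_mul (B1 * B2)).mul_const 4
      refine hgint.mono' (hFmeas.norm.aestronglyMeasurable.integral_prod_right') ?_
      refine Filter.Eventually.of_forall fun r => ?_
      rw [Real.norm_eq_abs, abs_of_nonneg (integral_nonneg fun s => norm_nonneg _)]
      exact hbnd r
  -- rewrite LHS as iterated integral of f
  have step1 : (∫ r in Set.Ioi (0 : ℝ),
      ∫ s in (-r)..0, ψ (s + r) * (Real.exp (-r) : ℂ) * φ s)
      = ∫ r in Set.Ioi (0:ℝ), ∫ s, f r s := by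
    apply setIntegral_congr_fun measurableSet_Ioi
    intro r hr
    show (∫ s in (-r)..0, ψ (s + r) * (Real.exp (-r) : ℂ) * φ s) = ∫ s, f r s
    have hr0 : (0:ℝ) < r := hr
    rw [intervalIntegral.integral_of_le (by linarith)]
    simp only [hfdef]
    rw [← MeasureTheory.integral_indicator measurableSet_Ioc]
  rw [step1, MeasureTheory.integral_integral_swap hInt]
  -- show each inner integral vanishes
  have inner_zero : ∀ s : ℝ, (∫ r in Set.Ioi (0:ℝ), f r s) = 0 := by
    intro s
    by_cases hs : s ≤ 0
    · have hrep : ∀ r : ℝ, f r s =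
          (Set.Ioi (-s)).indicator (fun r => ψ (s + r) * (Real.exp (-r) : ℂ) * φ s) r := by
        intro r
        simp only [hfdef]
        by_cases hr : -s < r
        · rw [Set.indicator_of_mem (Set.mem_Ioi.2 hr),
            Set.indicator_of_mem (Set.mem_Ioc.2 ⟨by linarith, hs⟩)]
        · push_neg at hr
          rw [Set.indicator_of_notMem (show s ∉ Set.Ioc (-r) 0 by
              simp only [Set.mem_Ioc]; push_neg; intro h; linarith),
            Set.indicator_of_notMem (show r ∉ Set.Ioi (-s) by simpa using hr)]
      calc (∫ r in Set.Ioi (0:ℝ), f r s)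
          = ∫ r in Set.Ioi (0:ℝ),
              (Set.Ioi (-s)).indicator (fun r => ψ (s + r) * (Real.exp (-r) : ℂ) * φ s) r := by
            exact setIntegral_congr_fun measurableSet_Ioi fun r _ => hrep r
        _ = ∫ r in Set.Ioi (0:ℝ) ∩ Set.Ioi (-s), ψ (s + r) * (Real.exp (-r) : ℂ) * φ s :=
            setIntegral_indicator measurableSet_Ioi
        _ = ∫ r in Set.Ioi (-s), ψ (s + r) * (Real.exp (-r) : ℂ) * φ s := by
            rw [Set.Ioi_inter_Ioi, max_eq_right (by linarith)]
        _ = ∫ r, (Set.Ioi (-s)).indicator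
              (fun r => ψ (s + r) * (Real.exp (-r) : ℂ) * φ s) r := by
            rw [MeasureTheory.integral_indicator measurableSet_Ioi]
        _ = ∫ r, (Set.Ioi (-s)).indicator
              (fun r => ψ (s + r) * (Real.exp (-r) : ℂ) * φ s) (r + (-s)) := by
            rw [integral_add_right_eq_self]
        _ = ∫ r, (Set.Ioi (0:ℝ)).indicator
              (fun r => (ψ r * (Real.exp (-r) : ℂ)) * ((Real.exp s : ℂ) * φ s)) r := by
            congr 1
            funext r
            by_cases hr : 0 < r
            · rw [Set.indicator_of_mem (by simp only [Set.mem_Ioi]; linarith),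
                Set.indicator_of_mem (Set.mem_Ioi.2 hr)]
              have : s + (r + -s) = r := by ring
              rw [this]
              have he : (Real.exp (-(r + -s)) : ℂ) = (Real.exp (-r) : ℂ) * (Real.exp s : ℂ) := by
                rw [← Complex.ofReal_mul, ← Real.exp_add]
                ring_nf
              rw [he]; ring
            · rw [Set.indicator_of_notMem (by simp only [Set.mem_Ioi]; push_neg at hr ⊢; linarith),
                Set.indicator_of_notMem (by simpa using hr)]
        _ = ∫ r in Set.Ioi (0:ℝ), (ψ r * (Real.exp (-r) : ℂ)) * ((Real.exp s : ℂ) * φ s) :=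
            MeasureTheory.integral_indicator measurableSet_Ioi
        _ = (∫ r in Set.Ioi (0:ℝ), ψ r * (Real.exp (-r) : ℂ)) * ((Real.exp s : ℂ) * φ s) :=
            MeasureTheory.integral_mul_const _ _
        _ = 0 := by rw [hzero, zero_mul]
    · have : ∀ r : ℝ, f r s = 0 := by
        intro r
        rw [hfdef]
        exact Set.indicator_of_notMem
          (by simp only [Set.mem_Ioc]; push_neg; intro h; linarith) _
      simp only [this, integral_zero]
  simp only [inner_zero, integral_zero]
end

section
/- Let β > 0, r : ℤ → ℝ, and for each j ∈ ℤ let A_j : ℝ → ℂ be continuous with a_j := sup_t |A_j(t)|, where ∑_j a_j·|r_j|·exp(β·|r_j|) < ∞. Let x : ℝ → ℂ be bounded and let y : ℝ → ℂ be continuous with |y(s)| ≤ K·exp(−β·max(s,0)) for all s ∈ ℝ and some K > 0. Define H(t) = conj(y(t))·x(t) − ∑_{j∈ℤ} ∫_t^{t+r_j} conj(y(s−r_j))·A_j(s−r_j)·x(s) ds. Then H(t) → 0 as t → ∞. -/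
/-- The Hale inner product ⟨y^t, x_t⟩_t tends to 0 as t → ∞ when y decays
exponentially. -/
theorem hale_inner_product_vanishes_at_infinity
    (β : ℝ) (hβ : 0 < β) (r : ℤ → ℝ) (A : ℤ → ℝ → ℂ) (a : ℤ → ℝ)
    (hAc : ∀ j, Continuous (A j)) (hAb : ∀ j t, ‖A j t‖ ≤ a j)
    (hsum : Summable (fun j : ℤ => a j * |r j| * Real.exp (β * |r j|)))
    (x y : ℝ → ℂ) (hxb : ∃ B, ∀ t, ‖x t‖ ≤ B) (hyc : Continuous y)
    (K : ℝ) (hK : 0 < K) (hy : ∀ s, ‖y s‖ ≤ K * Real.exp (-β * max s 0)) :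
    Filter.Tendsto
      (fun t : ℝ => (starRingEnd ℂ) (y t) * x t
        - ∑' j : ℤ, ∫ s in t..(t + r j),
            (starRingEnd ℂ) (y (s - r j)) * A j (s - r j) * x s)
      Filter.atTop (nhds 0) := by
  obtain ⟨B, hxB⟩ := hxb
  have hB0 : 0 ≤ B := le_trans (norm_nonneg _) (hxB 0)
  have ha0 : ∀ j, 0 ≤ a j := fun j => le_trans (norm_nonneg _) (hAb j 0)
  set c : ℤ → ℝ := fun j => a j * |r j| * Real.exp (β * |r j|) with hc
  have hc0 : ∀ j, 0 ≤ c j := fun j =>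
    mul_nonneg (mul_nonneg (ha0 j) (abs_nonneg _)) (Real.exp_pos _).le
  -- bound for each integral
  have hbound : ∀ (t : ℝ) (j : ℤ),
      ‖∫ s in t..(t + r j), (starRingEnd ℂ) (y (s - r j)) * A j (s - r j) * x s‖
        ≤ K * B * Real.exp (-β * t) * c j := by
    intro t j
    have h1 : ∀ s ∈ Set.uIoc t (t + r j),
        ‖(starRingEnd ℂ) (y (s - r j)) * A j (s - r j) * x s‖
          ≤ K * Real.exp (β * |r j|) * Real.exp (-β * t) * (a j * B) := by
      intro s hs
      have hsr : t - |r j| ≤ s - r j := by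
        rcases le_total (r j) 0 with h | h
        · have hmin : min t (t + r j) = t + r j := min_eq_right (by linarith)
          have h2 := hs.1
          rw [hmin] at h2
          have := abs_nonneg (r j)
          linarith
        · have hmin : min t (t + r j) = t := min_eq_left (by linarith)
          have h2 := hs.1
          rw [hmin] at h2
          rw [abs_of_nonneg h]
          linarith
      have hymax : t - |r j| ≤ max (s - r j) 0 := le_trans hsr (le_max_left _ _)
      have hyle : ‖y (s - r j)‖ ≤ K * (Real.exp (β * |r j|) * Real.exp (-β * t)) := by
        refine le_trans (hy (s - r j)) ?_
        rw [← Real.exp_add]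
        refine mul_le_mul_of_nonneg_left (Real.exp_le_exp.mpr (by nlinarith)) hK.le
      calc ‖(starRingEnd ℂ) (y (s - r j)) * A j (s - r j) * x s‖
          = ‖y (s - r j)‖ * ‖A j (s - r j)‖ * ‖x s‖ := by
            rw [norm_mul, norm_mul, RingHomIsometric.norm_map]
        _ ≤ (K * (Real.exp (β * |r j|) * Real.exp (-β * t))) * a j * B := by
            refine mul_le_mul (mul_le_mul hyle (hAb j _) (norm_nonneg _) (by positivity))
              (hxB s) (norm_nonneg _) ?_
            exact mul_nonneg (by positivity) (ha0 j)
        _ = K * Real.exp (β * |r j|) * Real.exp (-β * t) * (a j * B) := by ring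
    have h2 := intervalIntegral.norm_integral_le_of_norm_le_const h1
    calc ‖∫ s in t..(t + r j), (starRingEnd ℂ) (y (s - r j)) * A j (s - r j) * x s‖
        ≤ K * Real.exp (β * |r j|) * Real.exp (-β * t) * (a j * B) * |t + r j - t| := h2
      _ = K * B * Real.exp (-β * t) * c j := by
          rw [show t + r j - t = r j by ring, hc]; ring
  have hcsum : ∀ t : ℝ, Summable (fun j => K * B * Real.exp (-β * t) * c j) :=
    fun t => hsum.mul_left _
  have hIsum : ∀ t : ℝ, Summable (fun j : ℤ =>
      ∫ s in t..(t + r j), (starRingEnd ℂ) (y (s - r j)) * A j (s - r j) * x s) :=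
    fun t => Summable.of_norm_bounded (hcsum t) (hbound t)
  set S := ∑' j, c j with hS
  have hS0 : 0 ≤ S := tsum_nonneg hc0
  have hgbound : ∀ t : ℝ, ‖(starRingEnd ℂ) (y t) * x t
        - ∑' j : ℤ, ∫ s in t..(t + r j),
            (starRingEnd ℂ) (y (s - r j)) * A j (s - r j) * x s‖
      ≤ K * B * (1 + S) * Real.exp (-β * t) := by
    intro t
    have h1 : ‖(starRingEnd ℂ) (y t) * x t‖ ≤ K * B * Real.exp (-β * t) := by
      rw [norm_mul, RingHomIsometric.norm_map]
      calc ‖y t‖ * ‖x t‖ ≤ (K * Real.exp (-β * max t 0)) * B :=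
            mul_le_mul (hy t) (hxB t) (norm_nonneg _) (by positivity)
        _ = K * B * Real.exp (-β * max t 0) := by ring
        _ ≤ K * B * Real.exp (-β * t) := by
            have h3 : β * t ≤ β * max t 0 :=
              mul_le_mul_of_nonneg_left (le_max_left t 0) hβ.le
            exact mul_le_mul_of_nonneg_left (Real.exp_le_exp.mpr (by linarith))
              (by positivity)
    have h2 : ‖∑' j : ℤ, ∫ s in t..(t + r j),
          (starRingEnd ℂ) (y (s - r j)) * A j (s - r j) * x s‖
        ≤ K * B * Real.exp (-β * t) * S := by
      calc _ ≤ ∑' j : ℤ, ‖∫ s in t..(t + r j),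
              (starRingEnd ℂ) (y (s - r j)) * A j (s - r j) * x s‖ :=
            norm_tsum_le_tsum_norm
              (Summable.of_nonneg_of_le (fun j => norm_nonneg _) (hbound t) (hcsum t))
        _ ≤ ∑' j : ℤ, K * B * Real.exp (-β * t) * c j :=
            Summable.tsum_le_tsum (hbound t)
              (Summable.of_nonneg_of_le (fun j => norm_nonneg _) (hbound t) (hcsum t))
              (hcsum t)
        _ = K * B * Real.exp (-β * t) * S := tsum_mul_left
    calc _ ≤ ‖(starRingEnd ℂ) (y t) * x t‖ + ‖∑' j : ℤ, ∫ s in t..(t + r j),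
            (starRingEnd ℂ) (y (s - r j)) * A j (s - r j) * x s‖ := norm_sub_le _ _
      _ ≤ K * B * Real.exp (-β * t) + K * B * Real.exp (-β * t) * S := add_le_add h1 h2
      _ = K * B * (1 + S) * Real.exp (-β * t) := by ring
  have hexp : Filter.Tendsto (fun t : ℝ => Real.exp (-β * t)) Filter.atTop (nhds 0) := by
    have h1 : Filter.Tendsto (fun t : ℝ => β * t) Filter.atTop Filter.atTop :=
      Filter.Tendsto.const_mul_atTop hβ Filter.tendsto_id
    have h2 := Real.tendsto_exp_neg_atTop_nhds_zero.comp h1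
    simpa [Function.comp_def, neg_mul] using h2
  have hg : Filter.Tendsto (fun t : ℝ => K * B * (1 + S) * Real.exp (-β * t))
      Filter.atTop (nhds 0) := by
    simpa using hexp.const_mul (K * B * (1 + S))
  exact squeeze_zero_norm hgbound hg
end

section
/- Let a < b be real numbers and let d¹, …, dⁿ : [a,b] → ℂ be continuous and linearly independent. Then there exist continuous functions ψ¹, …, ψⁿ : [a,b] → ℂ with ψ^j(a) = ψ^j(b) = 0 for all j, such that ∫_a^b conj(d^i(t))·ψ^j(t) dt = δ_{ij} for all 1 ≤ i, j ≤ n, where δ_{ij} is the Kronecker delta. -/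
open MeasureTheory intervalIntegral Set

/-- Existence of a dual basis of continuous functions vanishing at the endpoints
for a linearly independent family of continuous functions (Lemma 5.2). -/
theorem dual_basis_vanishing_at_endpoints
    (a b : ℝ) (hab : a < b) (n : ℕ) (d : Fin n → ℝ → ℂ)
    (hdc : ∀ i, ContinuousOn (d i) (Set.Icc a b))
    (hli : LinearIndependent ℂ (fun i => (Set.Icc a b).restrict (d i))) :
    ∃ ψ : Fin n → ℝ → ℂ,
      (∀ j, ContinuousOn (ψ j) (Set.Icc a b)) ∧
      (∀ j, ψ j a = 0 ∧ ψ j b = 0) ∧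
      ∀ i j, (∫ t in a..b, (starRingEnd ℂ) (d i t) * ψ j t)
        = if i = j then 1 else 0 := by
  classical
  set χ : ℝ → ℝ := fun t => (t - a) * (b - t) with hχdef
  have hχc : Continuous χ := by fun_prop
  have hχpos : ∀ t ∈ Set.Ioo a b, 0 < χ t := by
    intro t ht; exact mul_pos (by linarith [ht.1]) (by linarith [ht.2])
  have hχnn : ∀ t ∈ Set.Icc a b, 0 ≤ χ t := by
    intro t ht; exact mul_nonneg (by linarith [ht.1]) (by linarith [ht.2])
  -- integrability helper
  have hint : ∀ f : ℝ → ℂ, ContinuousOn f (Set.Icc a b) →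
      IntervalIntegrable f volume a b := by
    intro f hf
    exact ContinuousOn.intervalIntegrable (by rwa [Set.uIcc_of_le hab.le])
  have hintR : ∀ f : ℝ → ℝ, ContinuousOn f (Set.Icc a b) →
      IntervalIntegrable f volume a b := by
    intro f hf
    exact ContinuousOn.intervalIntegrable (by rwa [Set.uIcc_of_le hab.le])
  -- continuity of the basic integrands
  have hcont : ∀ (i k : Fin n),
      ContinuousOn (fun t => (starRingEnd ℂ) (d i t) * ((χ t : ℂ) * d k t))
        (Set.Icc a b) := by
    intro i k
    exact ((Complex.continuous_conj.comp_continuousOn (hdc i)).mul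
      (((Complex.continuous_ofReal.comp hχc).continuousOn).mul (hdc k)))
  -- the Gram-type matrix
  set Z : Matrix (Fin n) (Fin n) ℂ :=
    Matrix.of fun i j => ∫ t in a..b, (starRingEnd ℂ) (d i t) * ((χ t : ℂ) * d j t)
    with hZdef
  -- Z is invertible
  have hdet : Z.det ≠ 0 := by
    intro hdet
    obtain ⟨c, hc0, hc⟩ := Matrix.exists_mulVec_eq_zero_iff.mpr hdet
    set g : ℝ → ℂ := fun t => ∑ j, c j * d j t with hgdef
    have hgc : ContinuousOn g (Set.Icc a b) := by
      apply continuousOn_finset_sum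
      intro j _
      exact continuousOn_const.mul (hdc j)
    -- each row kills g
    have h1 : ∀ i, (∫ t in a..b,
        (starRingEnd ℂ) (d i t) * ((χ t : ℂ) * g t)) = 0 := by
      intro i
      have := congrFun hc i
      simp only [Matrix.mulVec, dotProduct, Pi.zero_apply] at this
      rw [← this]
      have : ∀ j : Fin n, Z i j * c j
          = ∫ t in a..b, (starRingEnd ℂ) (d i t) * ((χ t : ℂ) * d j t) * c j := by
        intro j
        rw [hZdef]
        simp [← intervalIntegral.integral_mul_const]
      rw [Finset.sum_congr rfl (fun j _ => this j), ←
        intervalIntegral.integral_finset_sum]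
      · congr 1; funext t
        simp only [hgdef, Finset.mul_sum]
        apply Finset.sum_congr rfl
        intro j _; ring
      · intro j _
        exact (hint _ ((hcont i j).mul continuousOn_const))
    -- hence the weighted integral vanishes
    have h2 : (∫ t in a..b,
        (starRingEnd ℂ) (g t) * ((χ t : ℂ) * g t)) = 0 := by
      have expand : ∀ t, (starRingEnd ℂ) (g t) * ((χ t : ℂ) * g t)
          = ∑ i, (starRingEnd ℂ) (c i) *
              ((starRingEnd ℂ) (d i t) * ((χ t : ℂ) * g t)) := by
        intro t
        simp only [hgdef, map_sum, map_mul, Finset.sum_mul]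
        apply Finset.sum_congr rfl
        intro i _; ring
      rw [intervalIntegral.integral_congr (fun t _ => expand t),
        intervalIntegral.integral_finset_sum]
      · simp only [intervalIntegral.integral_const_mul]
        exact Finset.sum_eq_zero fun i _ => by rw [h1 i, mul_zero]
      · intro i _
        exact (hint _ (continuousOn_const.mul
          ((Complex.continuous_conj.comp_continuousOn (hdc i)).mul
            (((Complex.continuous_ofReal.comp hχc).continuousOn).mul hgc))))
    -- rewrite as a real integral of a nonnegative function
    have hreal : (∫ t in a..b, χ t * Complex.normSq (g t)) = 0 := by
      have : ∀ t, (starRingEnd ℂ) (g t) * ((χ t : ℂ) * g t)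
          = ((χ t * Complex.normSq (g t) : ℝ) : ℂ) := by
        intro t
        calc (starRingEnd ℂ) (g t) * ((χ t : ℂ) * g t)
            = (χ t : ℂ) * ((starRingEnd ℂ) (g t) * g t) := by ring
          _ = (χ t : ℂ) * ((Complex.normSq (g t) : ℝ) : ℂ) := by
              rw [← Complex.normSq_eq_conj_mul_self]
          _ = ((χ t * Complex.normSq (g t) : ℝ) : ℂ) := by push_cast; ring
      rw [intervalIntegral.integral_congr (fun t _ => this t),
        intervalIntegral.integral_ofReal] at h2
      exact_mod_cast h2
    have hcontR : ContinuousOn (fun t => χ t * Complex.normSq (g t))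
        (Set.Icc a b) :=
      hχc.continuousOn.mul (Complex.continuous_normSq.comp_continuousOn hgc)
    -- g vanishes on the open interval
    have hg0 : ∀ t ∈ Set.Ioo a b, g t = 0 := by
      intro t ht
      by_contra hgt
      have hpos : 0 < ∫ s in a..b, χ s * Complex.normSq (g s) := by
        apply intervalIntegral.integral_pos hab hcontR
        · intro x hx
          exact mul_nonneg (hχnn x ⟨hx.1.le, hx.2⟩) (Complex.normSq_nonneg _)
        · exact ⟨t, ⟨ht.1.le, ht.2.le⟩,
            mul_pos (hχpos t ht) (Complex.normSq_pos.mpr hgt)⟩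
      rw [hreal] at hpos; exact lt_irrefl 0 hpos
    -- extend to the endpoints by continuity
    have hga : g a = 0 := by
      have h1 : Filter.Tendsto g (nhdsWithin a (Set.Ioo a b)) (nhds (g a)) :=
        ((hgc a ⟨le_refl a, hab.le⟩).mono Set.Ioo_subset_Icc_self).tendsto
      have h2 : Filter.Tendsto g (nhdsWithin a (Set.Ioo a b)) (nhds 0) := by
        apply Filter.Tendsto.congr' _ tendsto_const_nhds
        filter_upwards [self_mem_nhdsWithin] with x hx
        exact (hg0 x hx).symm
      have := left_nhdsWithin_Ioo_neBot hab
      exact tendsto_nhds_unique h1 h2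
    have hgb : g b = 0 := by
      have h1 : Filter.Tendsto g (nhdsWithin b (Set.Ioo a b)) (nhds (g b)) :=
        ((hgc b ⟨hab.le, le_refl b⟩).mono Set.Ioo_subset_Icc_self).tendsto
      have h2 : Filter.Tendsto g (nhdsWithin b (Set.Ioo a b)) (nhds 0) := by
        apply Filter.Tendsto.congr' _ tendsto_const_nhds
        filter_upwards [self_mem_nhdsWithin] with x hx
        exact (hg0 x hx).symm
      have := right_nhdsWithin_Ioo_neBot hab
      exact tendsto_nhds_unique h1 h2
    have hgIcc : ∀ t ∈ Set.Icc a b, g t = 0 := by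
      intro t ht
      rcases eq_or_lt_of_le ht.1 with h | h
      · rw [← h]; exact hga
      rcases eq_or_lt_of_le ht.2 with h' | h'
      · rw [h']; exact hgb
      exact hg0 t ⟨h, h'⟩
    -- contradiction with linear independence
    have := Fintype.linearIndependent_iff.mp hli c ?_
    · exact hc0 (funext fun i => this i)
    · funext x
      simp only [Finset.sum_apply, Pi.smul_apply, Pi.zero_apply, smul_eq_mul,
        Set.restrict_apply]
      exact hgIcc x x.2
  -- construct ψ from the inverse matrix
  refine ⟨fun j t => ∑ k, Z⁻¹ k j * ((χ t : ℂ) * d k t), ?_, ?_, ?_⟩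
  · intro j
    apply continuousOn_finset_sum
    intro k _
    exact continuousOn_const.mul
      (((Complex.continuous_ofReal.comp hχc).continuousOn).mul (hdc k))
  · intro j
    constructor <;>
      · simp only [hχdef]
        norm_num
  · intro i j
    have step : ∀ k : Fin n,
        (∫ t in a..b, (starRingEnd ℂ) (d i t) * (Z⁻¹ k j * ((χ t : ℂ) * d k t)))
          = Z i k * Z⁻¹ k j := by
      intro k
      have : ∀ t, (starRingEnd ℂ) (d i t) * (Z⁻¹ k j * ((χ t : ℂ) * d k t))
          = (starRingEnd ℂ) (d i t) * ((χ t : ℂ) * d k t) * Z⁻¹ k j := by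
        intro t; ring
      rw [intervalIntegral.integral_congr (fun t _ => this t),
        intervalIntegral.integral_mul_const]
      rfl
    calc (∫ t in a..b, (starRingEnd ℂ) (d i t)
            * ∑ k, Z⁻¹ k j * ((χ t : ℂ) * d k t))
        = ∫ t in a..b, ∑ k, (starRingEnd ℂ) (d i t)
            * (Z⁻¹ k j * ((χ t : ℂ) * d k t)) := by
          congr 1; funext t; rw [Finset.mul_sum]
      _ = ∑ k, ∫ t in a..b, (starRingEnd ℂ) (d i t)
            * (Z⁻¹ k j * ((χ t : ℂ) * d k t)) := by
          apply intervalIntegral.integral_finset_sum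
          intro k _
          have : (fun t => (starRingEnd ℂ) (d i t) * (Z⁻¹ k j * ((χ t : ℂ) * d k t)))
              = fun t => (starRingEnd ℂ) (d i t) * ((χ t : ℂ) * d k t) * Z⁻¹ k j := by
            funext t; ring
          rw [this]
          exact hint _ ((hcont i k).mul continuousOn_const)
      _ = ∑ k, Z i k * Z⁻¹ k j := Finset.sum_congr rfl fun k _ => step k
      _ = (Z * Z⁻¹) i j := rfl
      _ = (1 : Matrix (Fin n) (Fin n) ℂ) i j := by
          rw [Matrix.mul_nonsing_inv Z (isUnit_iff_ne_zero.mpr hdet)]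
      _ = if i = j then 1 else 0 := Matrix.one_apply
end

section
/- Let α > 0, τ ∈ ℝ, a : ℤ → ℝ nonnegative and r : ℤ → ℝ, with C₁ := ∑_{j∈ℤ} a_j·exp(α|r_j|) < ∞ and with the tail bound ∑_{j : r_j ≥ T} a_j ≤ K·exp(−2αT) for every T ≥ 0 and some K > 0. Let M, K̃ ≥ 0 and let x : ℝ → ℂ satisfy |x(s)| ≤ M for all s ∈ ℝ and |x(s)| ≤ K̃·M·exp(α(s−τ)) for all s ≤ τ. Then for every t ≤ τ we have ∑_{j∈ℤ} a_j·|x(t+r_j)| ≤ (C₁·K̃ + K)·M·exp(α(t−τ)). -/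
/-- Bootstrapping estimate: exponential decay of a bounded solution is inherited
by the weighted sums arising in the equation (proof of Theorem 2.2). -/
theorem bootstrap_exponential_decay
    (α τ : ℝ) (hα : 0 < α) (a r : ℤ → ℝ) (ha : ∀ j, 0 ≤ a j)
    (hC : Summable (fun j : ℤ => a j * Real.exp (α * |r j|)))
    (K : ℝ) (hK : 0 < K)
    (htail : ∀ T ≥ (0 : ℝ), (∑' j : {j : ℤ // T ≤ r j}, a j.1) ≤ K * Real.exp (-2 * α * T))
    (M K' : ℝ) (hM : 0 ≤ M) (hK' : 0 ≤ K')
    (x : ℝ → ℂ) (hx1 : ∀ s, ‖x s‖ ≤ M)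
    (hx2 : ∀ s ≤ τ, ‖x s‖ ≤ K' * M * Real.exp (α * (s - τ))) :
    ∀ t ≤ τ, (∑' j : ℤ, a j * ‖x (t + r j)‖)
      ≤ ((∑' j : ℤ, a j * Real.exp (α * |r j|)) * K' + K) * M * Real.exp (α * (t - τ)) := by
  intro t ht
  set E := Real.exp (α * (t - τ)) with hE
  have hE0 : 0 < E := Real.exp_pos _
  have hone : ∀ j, (1:ℝ) ≤ Real.exp (α * |r j|) := fun j =>
    Real.one_le_exp (by positivity)
  have hsum_a : Summable a :=
    hC.of_nonneg_of_le ha (fun j => le_mul_of_one_le_right (ha j) (hone j))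
  set g : ℤ → ℝ := fun j =>
    if t + r j ≤ τ then a j * Real.exp (α * |r j|) * (K' * M * E) else 0 with hg
  set h : ℤ → ℝ := fun j => if τ - t ≤ r j then a j * M else 0 with hh
  have hg_nonneg : ∀ j, 0 ≤ g j := by
    intro j; simp only [hg]; split
    · have := ha j; positivity
    · exact le_refl 0
  have hh_nonneg : ∀ j, 0 ≤ h j := by
    intro j; simp only [hh]; split
    · exact mul_nonneg (ha j) hM
    · exact le_refl 0
  have hg_le : ∀ j, g j ≤ a j * Real.exp (α * |r j|) * (K' * M * E) := by
    intro j; simp only [hg]; split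
    · exact le_refl _
    · have := ha j; positivity
  have hh_le : ∀ j, h j ≤ a j * M := by
    intro j; simp only [hh]; split
    · exact le_refl _
    · exact mul_nonneg (ha j) hM
  have hsum_g : Summable g :=
    (hC.mul_right (K' * M * E)).of_nonneg_of_le hg_nonneg hg_le
  have hsum_h : Summable h :=
    (hsum_a.mul_right M).of_nonneg_of_le hh_nonneg hh_le
  have hf_le : ∀ j, a j * ‖x (t + r j)‖ ≤ g j + h j := by
    intro j
    by_cases hc : t + r j ≤ τ
    · have h1 : ‖x (t + r j)‖ ≤ K' * M * Real.exp (α * (t + r j - τ)) := hx2 _ hc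
      have h2 : Real.exp (α * (t + r j - τ)) ≤ Real.exp (α * |r j|) * E := by
        rw [hE, ← Real.exp_add]
        apply Real.exp_le_exp.mpr
        have : r j ≤ |r j| := le_abs_self _
        nlinarith [hα.le]
      have : a j * ‖x (t + r j)‖ ≤ a j * Real.exp (α * |r j|) * (K' * M * E) := by
        calc a j * ‖x (t + r j)‖ ≤ a j * (K' * M * Real.exp (α * (t + r j - τ))) :=
              mul_le_mul_of_nonneg_left h1 (ha j)
          _ ≤ a j * (K' * M * (Real.exp (α * |r j|) * E)) := by
              apply mul_le_mul_of_nonneg_left _ (ha j)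
              exact mul_le_mul_of_nonneg_left h2 (by positivity)
          _ = a j * Real.exp (α * |r j|) * (K' * M * E) := by ring
      simp only [hg, hh, if_pos hc]
      calc a j * ‖x (t + r j)‖ ≤ a j * Real.exp (α * |r j|) * (K' * M * E) := this
        _ ≤ _ + _ := le_add_of_nonneg_right (hh_nonneg j)
    · have hc' : τ - t ≤ r j := by push_neg at hc; linarith
      have : a j * ‖x (t + r j)‖ ≤ a j * M := mul_le_mul_of_nonneg_left (hx1 _) (ha j)
      simp only [hg, hh, if_neg hc, if_pos hc']
      linarith
  have hsum_f : Summable (fun j : ℤ => a j * ‖x (t + r j)‖) :=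
    (hsum_g.add hsum_h).of_nonneg_of_le
      (fun j => mul_nonneg (ha j) (norm_nonneg _)) hf_le
  have step1 : (∑' j : ℤ, a j * ‖x (t + r j)‖) ≤ (∑' j, g j) + (∑' j, h j) := by
    calc (∑' j : ℤ, a j * ‖x (t + r j)‖) ≤ ∑' j, (g j + h j) :=
          Summable.tsum_le_tsum hf_le hsum_f (hsum_g.add hsum_h)
      _ = (∑' j, g j) + (∑' j, h j) := Summable.tsum_add hsum_g hsum_h
  have hgsum : (∑' j, g j) ≤ (∑' j : ℤ, a j * Real.exp (α * |r j|)) * (K' * M * E) := by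
    calc (∑' j, g j) ≤ ∑' j, a j * Real.exp (α * |r j|) * (K' * M * E) :=
          Summable.tsum_le_tsum hg_le hsum_g (hC.mul_right _)
      _ = (∑' j : ℤ, a j * Real.exp (α * |r j|)) * (K' * M * E) := tsum_mul_right
  have hT : (0:ℝ) ≤ τ - t := by linarith
  have hhsum : (∑' j, h j) ≤ K * Real.exp (-2 * α * (τ - t)) * M := by
    have hind : h = (Set.indicator {j : ℤ | τ - t ≤ r j} (fun j => a j * M)) := by
      funext j
      simp only [hh, Set.indicator, Set.mem_setOf_eq]
    have hsub : (∑' j, h j) = ∑' j : {j : ℤ // τ - t ≤ r j}, a j.1 * M := by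
      rw [hind, ← tsum_subtype]; rfl
    rw [hsub, tsum_mul_right]
    apply mul_le_mul_of_nonneg_right _ hM
    exact htail (τ - t) hT
  have hexp : Real.exp (-2 * α * (τ - t)) ≤ E := by
    rw [hE]
    apply Real.exp_le_exp.mpr
    nlinarith [hα.le]
  have : (∑' j : ℤ, a j * ‖x (t + r j)‖)
      ≤ (∑' j : ℤ, a j * Real.exp (α * |r j|)) * (K' * M * E)
        + K * Real.exp (-2 * α * (τ - t)) * M := by
    linarith
  have hlast : K * Real.exp (-2 * α * (τ - t)) * M ≤ K * M * E := by
    have := mul_le_mul_of_nonneg_left hexp hK.le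
    nlinarith
  have hC_nonneg : 0 ≤ ∑' j : ℤ, a j * Real.exp (α * |r j|) :=
    tsum_nonneg (fun j => mul_nonneg (ha j) (Real.exp_pos _).le)
  nlinarith [this, hlast]
end

section
/- Let r : ℤ → ℝ, τ ∈ ℝ, and for each j ∈ ℤ let A_j : ℝ → ℂ be continuous and bounded, with ∑_j (sup_t |A_j(t)|)·|r_j| < ∞. For bounded continuous ψ, φ : ℝ → ℂ define ⟨ψ,φ⟩_τ = conj(ψ(0))·φ(0) − ∑_{j∈ℤ} ∫_0^{r_j} conj(ψ(s−r_j))·A_j(τ+s−r_j)·φ(s) ds, and define the adjoint pairing ⟨φ,ψ⟩^{adj}_τ = conj(φ(0))·ψ(0) + ∑_{j∈ℤ} ∫_0^{−r_j} conj(φ(s+r_j))·conj(A_j(τ+s))·ψ(s) ds. Then conj( ⟨φ,ψ⟩^{adj}_τ ) = ⟨ψ,φ⟩_τ. -/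
open intervalIntegral MeasureTheory Complex

lemma intervalIntegral_conj {f : ℝ → ℂ} {a b : ℝ} :
    ∫ s in a..b, (starRingEnd ℂ) (f s) = (starRingEnd ℂ) (∫ s in a..b, f s) := by
  simp only [intervalIntegral, integral_conj, map_sub]

/-- The Hale inner product of the adjoint system is the conjugate of the Hale
inner product of the original system (scalar version of Lemma 6.14). -/
theorem hale_inner_product_adjoint
    (r : ℤ → ℝ) (τ : ℝ) (A : ℤ → ℝ → ℂ) (a : ℤ → ℝ)
    (hAc : ∀ j, Continuous (A j)) (hAb : ∀ j t, ‖A j t‖ ≤ a j)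
    (hsum : Summable (fun j : ℤ => a j * |r j|))
    (ψ φ : ℝ → ℂ) (hψc : Continuous ψ) (hφc : Continuous φ)
    (hψb : ∃ B, ∀ s, ‖ψ s‖ ≤ B) (hφb : ∃ B, ∀ s, ‖φ s‖ ≤ B) :
    (starRingEnd ℂ)
        ((starRingEnd ℂ) (φ 0) * ψ 0
          + ∑' j : ℤ, ∫ s in (0 : ℝ)..(-(r j)),
              (starRingEnd ℂ) (φ (s + r j)) * (starRingEnd ℂ) (A j (τ + s)) * ψ s)
      = (starRingEnd ℂ) (ψ 0) * φ 0
          - ∑' j : ℤ, ∫ s in (0 : ℝ)..(r j),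
              (starRingEnd ℂ) (ψ (s - r j)) * A j (τ + s - r j) * φ s := by
  have key : ∀ j : ℤ,
      (starRingEnd ℂ) (∫ s in (0 : ℝ)..(-(r j)),
          (starRingEnd ℂ) (φ (s + r j)) * (starRingEnd ℂ) (A j (τ + s)) * ψ s)
        = - ∫ s in (0 : ℝ)..(r j),
            (starRingEnd ℂ) (ψ (s - r j)) * A j (τ + s - r j) * φ s := by
    intro j
    rw [← intervalIntegral_conj]
    have := intervalIntegral.integral_comp_sub_right
      (a := (0:ℝ)) (b := r j)
      (f := fun s => (starRingEnd ℂ) ((starRingEnd ℂ) (φ (s + r j)) *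
        (starRingEnd ℂ) (A j (τ + s)) * ψ s)) (r j)
    simp only [zero_sub, sub_self] at this
    rw [intervalIntegral.integral_symm, ← this]
    congr 1
    apply intervalIntegral.integral_congr
    intro s _
    simp only [map_mul, RingHomCompTriple.comp_apply, RingHom.id_apply, Complex.conj_conj,
      sub_add_cancel]
    ring_nf
  calc (starRingEnd ℂ)
        ((starRingEnd ℂ) (φ 0) * ψ 0
          + ∑' j : ℤ, ∫ s in (0 : ℝ)..(-(r j)),
              (starRingEnd ℂ) (φ (s + r j)) * (starRingEnd ℂ) (A j (τ + s)) * ψ s)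
      = (starRingEnd ℂ) (ψ 0) * φ 0
          + ∑' j : ℤ, (starRingEnd ℂ) (∫ s in (0 : ℝ)..(-(r j)),
              (starRingEnd ℂ) (φ (s + r j)) * (starRingEnd ℂ) (A j (τ + s)) * ψ s) := by
        rw [map_add, map_mul, Complex.conj_conj]
        congr 1
        · ring
        · exact Complex.conjCLE.map_tsum
    _ = (starRingEnd ℂ) (ψ 0) * φ 0
          - ∑' j : ℤ, ∫ s in (0 : ℝ)..(r j),
              (starRingEnd ℂ) (ψ (s - r j)) * A j (τ + s - r j) * φ s := by
        simp only [key, tsum_neg]; ring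
end
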